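/- Let α ∈ (1,2), let f₂ := 1 − K and f₃(v) := f₂(2v), and set J_{kl} := ∫_ℝ f_k(v)·f_l(v)/|v|^{α+1} dv for k,l ∈ {2,3}. Then J₂₂, J₂₃, J₃₃ are finite, J₂₂ > 0, J₃₃ > 0, and the strict Cauchy–Schwarz inequality J₂₃² < J₂₂ · J₃₃ holds. -/
import Mathlib

open MeasureTheory Real Set

/-- The smooth truncation kernel `K`. -/
noncomputable def K (x : ℝ) : ℝ :=
  if |x| ≤ 1 then 1
  else if |x| < 2 then (1 + Real.exp (1 / (2 - |x|) + 1 / (1 - |x|)))⁻¹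
  else 0

/-- `f₂ = 1 - K`. -/
noncomputable def f₂ (v : ℝ) : ℝ := 1 - K v

/-- `f₃ v = f₂ (2 v)`. -/
noncomputable def f₃ (v : ℝ) : ℝ := f₂ (2 * v)

lemma K_of_le {x : ℝ} (h : |x| ≤ 1) : K x = 1 := if_pos h

lemma K_eq_zero {x : ℝ} (h : 2 ≤ |x|) : K x = 0 := by
  unfold K; rw [if_neg (by linarith), if_neg (by linarith)]

lemma K_nonneg (x : ℝ) : 0 ≤ K x := by
  unfold K; split_ifs with h1 h2
  · norm_num
  · positivity
  · exact le_rfl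

lemma K_le_one (x : ℝ) : K x ≤ 1 := by
  unfold K; split_ifs with h1 h2
  · exact le_rfl
  · rw [inv_le_one_iff₀]
    right
    nlinarith [Real.exp_pos (1 / (2 - |x|) + 1 / (1 - |x|))]
  · norm_num

lemma K_lt_one {x : ℝ} (h : 1 < |x|) : K x < 1 := by
  unfold K
  rw [if_neg (by linarith)]
  split_ifs with h2
  · rw [inv_lt_one_iff₀]
    right
    nlinarith [Real.exp_pos (1 / (2 - |x|) + 1 / (1 - |x|))]
  · norm_num

lemma measurable_K : Measurable K := by
  unfold K
  apply Measurable.ite (measurableSet_le (by fun_prop) measurable_const) measurable_const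
  apply Measurable.ite (measurableSet_lt (by fun_prop) measurable_const) _ measurable_const
  fun_prop

lemma measurable_f₂ : Measurable f₂ := measurable_const.sub measurable_K
lemma measurable_f₃ : Measurable f₃ := measurable_f₂.comp (by fun_prop)

lemma f₂_nonneg (v : ℝ) : 0 ≤ f₂ v := by simpa [f₂] using K_le_one v
lemma f₂_le_one (v : ℝ) : f₂ v ≤ 1 := by simpa [f₂] using K_nonneg v
lemma f₂_eq_zero {v : ℝ} (h : |v| ≤ 1) : f₂ v = 0 := by simp [f₂, K_of_le h]
lemma f₂_eq_one {v : ℝ} (h : 2 ≤ |v|) : f₂ v = 1 := by simp [f₂, K_eq_zero h]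
lemma f₂_pos {v : ℝ} (h : 1 < |v|) : 0 < f₂ v := by simpa [f₂] using K_lt_one h
lemma f₃_nonneg (v : ℝ) : 0 ≤ f₃ v := f₂_nonneg _
lemma f₃_le_one (v : ℝ) : f₃ v ≤ 1 := f₂_le_one _
lemma f₃_eq_zero {v : ℝ} (h : |v| ≤ 1/2) : f₃ v = 0 := by
  apply f₂_eq_zero; rw [abs_mul, abs_two]; linarith
lemma f₃_eq_one {v : ℝ} (h : 1 ≤ |v|) : f₃ v = 1 := by
  apply f₂_eq_one; rw [abs_mul, abs_two]; linarith
lemma f₃_pos {v : ℝ} (h : 1/2 < |v|) : 0 < f₃ v := by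
  apply f₂_pos; rw [abs_mul, abs_two]; linarith

lemma integrableOn_rpow_abs (α : ℝ) (hα1 : 1 < α) :
    IntegrableOn (fun v : ℝ => |v| ^ (-(α+1))) {v : ℝ | 1/2 ≤ |v|} := by
  have h2 : IntegrableOn (fun v : ℝ => |v| ^ (-(α+1))) (Ici (1/2 : ℝ)) := by
    rw [integrableOn_Ici_iff_integrableOn_Ioi]
    exact (integrableOn_Ioi_rpow_of_lt (show -(α+1) < -1 by linarith) (by norm_num : (0:ℝ) < 1/2)).congr_fun
      (fun x hx => by rw [abs_of_pos (lt_trans (by norm_num) hx)]) measurableSet_Ioi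
  have h1 : IntegrableOn (fun v : ℝ => |v| ^ (-(α+1))) (Iic (-(1/2) : ℝ)) := by
    have hI : Integrable ((Ici (1/2:ℝ)).indicator (fun v : ℝ => |v| ^ (-(α+1)))) :=
      h2.integrable_indicator measurableSet_Ici
    have hneg := hI.comp_neg
    have heq : (fun v : ℝ => (Ici (1/2:ℝ)).indicator (fun v : ℝ => |v| ^ (-(α+1))) (-v))
        = (Iic (-(1/2):ℝ)).indicator (fun v : ℝ => |v| ^ (-(α+1))) := by
      funext v
      by_cases h : v ≤ -(1/2:ℝ)
      · rw [Set.indicator_of_mem (by simpa [le_neg] using h),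
          Set.indicator_of_mem (by simpa using h), abs_neg]
      · rw [Set.indicator_of_notMem (by simpa [le_neg] using h),
          Set.indicator_of_notMem (by simpa using h)]
    rw [← integrable_indicator_iff measurableSet_Iic]
    exact heq ▸ hneg
  have hset : {v : ℝ | (1:ℝ)/2 ≤ |v|} = Iic (-(1/2:ℝ)) ∪ Ici (1/2:ℝ) := by
    ext v
    simp only [mem_setOf_eq, mem_union, mem_Iic, mem_Ici, le_abs, le_neg]
    tauto
  rw [hset]
  exact h1.union h2

lemma key_integrable (α : ℝ) (hα1 : 1 < α) {f g : ℝ → ℝ} (hf : Measurable f) (hg : Measurable g)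
    (hf0 : ∀ v, 0 ≤ f v) (hf1 : ∀ v, f v ≤ 1) (hg0 : ∀ v, 0 ≤ g v) (hg1 : ∀ v, g v ≤ 1)
    (hz : ∀ v : ℝ, |v| < 1/2 → f v = 0) :
    Integrable (fun v : ℝ => f v * g v / |v| ^ (α + 1)) := by
  have hS : MeasurableSet {v : ℝ | 1/2 ≤ |v|} := measurableSet_le measurable_const (by fun_prop)
  have hbound : Integrable ({v : ℝ | 1/2 ≤ |v|}.indicator fun v : ℝ => |v| ^ (-(α+1))) :=
    (integrableOn_rpow_abs α hα1).integrable_indicator hS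
  apply hbound.mono'
  · exact ((hf.mul hg).div (by fun_prop)).aestronglyMeasurable
  · filter_upwards with v
    rw [Real.norm_eq_abs]
    by_cases h : (1:ℝ)/2 ≤ |v|
    · rw [show ({v : ℝ | 1/2 ≤ |v|}.indicator (fun v : ℝ => |v| ^ (-(α+1))) v = |v| ^ (-(α+1)))
        from Set.indicator_of_mem (show v ∈ {v : ℝ | 1/2 ≤ |v|} from h) _]
      have hp : 0 < |v| ^ (α+1) := Real.rpow_pos_of_pos (by linarith) _
      rw [abs_of_nonneg (div_nonneg (mul_nonneg (hf0 v) (hg0 v)) hp.le),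
        Real.rpow_neg (abs_nonneg v), inv_eq_one_div]
      gcongr
      exact mul_le_one₀ (hf1 v) (hg0 v) (hg1 v)
    · push_neg at h
      rw [show ({v : ℝ | 1/2 ≤ |v|}.indicator (fun v : ℝ => |v| ^ (-(α+1))) v = 0)
        from Set.indicator_of_notMem (by simpa using not_le.2 h) _, hz v h, zero_mul, zero_div,
        abs_zero]

lemma int_pos {F : ℝ → ℝ} (hI : Integrable F) (h0 : ∀ v, 0 ≤ F v)
    {a b : ℝ} (hab : a < b) (hsub : Ioo a b ⊆ Function.support F) : 0 < ∫ v, F v := by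
  rw [integral_pos_iff_support_of_nonneg h0 hI]
  calc (0:ENNReal) < volume (Ioo a b) := by
        rw [Real.volume_Ioo]; exact ENNReal.ofReal_pos.2 (by linarith)
    _ ≤ volume (Function.support F) := measure_mono hsub

/-- For `α ∈ (1,2)` the integrals `J_kl = ∫ f_k f_l / |v|^(α+1) dv`, `k,l ∈ {2,3}`, are
finite, `J₂₂ > 0`, `J₃₃ > 0` and the strict Cauchy-Schwarz inequality
`J₂₃² < J₂₂ J₃₃` holds. -/
theorem stmt4 (α : ℝ) (hα1 : 1 < α) (hα2 : α < 2) :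
    Integrable (fun v : ℝ => f₂ v * f₂ v / |v| ^ (α + 1)) ∧
    Integrable (fun v : ℝ => f₂ v * f₃ v / |v| ^ (α + 1)) ∧
    Integrable (fun v : ℝ => f₃ v * f₃ v / |v| ^ (α + 1)) ∧
    0 < ∫ v : ℝ, f₂ v * f₂ v / |v| ^ (α + 1) ∧
    0 < ∫ v : ℝ, f₃ v * f₃ v / |v| ^ (α + 1) ∧
    (∫ v : ℝ, f₂ v * f₃ v / |v| ^ (α + 1)) ^ 2 <
      (∫ v : ℝ, f₂ v * f₂ v / |v| ^ (α + 1)) * ∫ v : ℝ, f₃ v * f₃ v / |v| ^ (α + 1) := by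
  have hA : Integrable (fun v : ℝ => f₂ v * f₂ v / |v| ^ (α + 1)) :=
    key_integrable α hα1 measurable_f₂ measurable_f₂ f₂_nonneg f₂_le_one f₂_nonneg f₂_le_one
      (fun v hv => f₂_eq_zero (by linarith))
  have hB : Integrable (fun v : ℝ => f₂ v * f₃ v / |v| ^ (α + 1)) :=
    key_integrable α hα1 measurable_f₂ measurable_f₃ f₂_nonneg f₂_le_one f₃_nonneg f₃_le_one
      (fun v hv => f₂_eq_zero (by linarith))
  have hC : Integrable (fun v : ℝ => f₃ v * f₃ v / |v| ^ (α + 1)) :=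
    key_integrable α hα1 measurable_f₃ measurable_f₃ f₃_nonneg f₃_le_one f₃_nonneg f₃_le_one
      (fun v hv => f₃_eq_zero hv.le)
  have hApos : 0 < ∫ v : ℝ, f₂ v * f₂ v / |v| ^ (α + 1) := by
    apply int_pos hA
      (fun v => div_nonneg (mul_nonneg (f₂_nonneg v) (f₂_nonneg v))
        (Real.rpow_nonneg (abs_nonneg v) _)) (show (2:ℝ) < 3 by norm_num)
    intro v hv
    have hv0 : (0:ℝ) < v := by linarith [hv.1]
    have h2 : (2:ℝ) ≤ |v| := by rw [abs_of_pos hv0]; exact hv.1.le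
    simp only [Function.mem_support]
    rw [f₂_eq_one h2, one_mul]
    have hp : 0 < |v| ^ (α+1) := Real.rpow_pos_of_pos (by linarith) _
    exact ne_of_gt (div_pos one_pos hp)
  have hCpos : 0 < ∫ v : ℝ, f₃ v * f₃ v / |v| ^ (α + 1) := by
    apply int_pos hC
      (fun v => div_nonneg (mul_nonneg (f₃_nonneg v) (f₃_nonneg v))
        (Real.rpow_nonneg (abs_nonneg v) _)) (show (2:ℝ) < 3 by norm_num)
    intro v hv
    have hv0 : (0:ℝ) < v := by linarith [hv.1]
    have h2 : (1:ℝ) ≤ |v| := by rw [abs_of_pos hv0]; linarith [hv.1]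
    simp only [Function.mem_support]
    rw [f₃_eq_one h2, one_mul]
    have hp : 0 < |v| ^ (α+1) := Real.rpow_pos_of_pos (by linarith) _
    exact ne_of_gt (div_pos one_pos hp)
  refine ⟨hA, hB, hC, hApos, hCpos, ?_⟩
  set A := ∫ v : ℝ, f₂ v * f₂ v / |v| ^ (α + 1) with hAdef
  set B := ∫ v : ℝ, f₂ v * f₃ v / |v| ^ (α + 1) with hBdef
  set C := ∫ v : ℝ, f₃ v * f₃ v / |v| ^ (α + 1) with hCdef
  set t : ℝ := B / A with htdef
  have hexp : ∀ v : ℝ, (t * f₂ v - f₃ v)^2 / |v| ^ (α + 1)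
      = t^2 * (f₂ v * f₂ v / |v| ^ (α + 1)) - (2*t) * (f₂ v * f₃ v / |v| ^ (α + 1))
        + f₃ v * f₃ v / |v| ^ (α + 1) := fun v => by ring
  have hq : Integrable (fun v : ℝ => (t * f₂ v - f₃ v)^2 / |v| ^ (α + 1)) := by
    have heq : (fun v : ℝ => (t * f₂ v - f₃ v)^2 / |v| ^ (α + 1))
        = fun v : ℝ => t^2 * (f₂ v * f₂ v / |v| ^ (α + 1))
            - (2*t) * (f₂ v * f₃ v / |v| ^ (α + 1)) + f₃ v * f₃ v / |v| ^ (α + 1) :=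
      funext hexp
    rw [heq]
    exact ((hA.const_mul _).sub (hB.const_mul _)).add hC
  have hval : ∫ v : ℝ, (t * f₂ v - f₃ v)^2 / |v| ^ (α + 1) = t^2 * A - 2*t*B + C := by
    have h1 : Integrable (fun v : ℝ => t^2 * (f₂ v * f₂ v / |v| ^ (α + 1))
        - 2*t * (f₂ v * f₃ v / |v| ^ (α + 1))) := (hA.const_mul (t^2)).sub (hB.const_mul (2*t))
    have h2 : Integrable (fun v : ℝ => t^2 * (f₂ v * f₂ v / |v| ^ (α + 1))) := hA.const_mul _
    have h3 : Integrable (fun v : ℝ => 2*t * (f₂ v * f₃ v / |v| ^ (α + 1))) := hB.const_mul _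
    simp_rw [hexp]
    rw [integral_add h1 hC, integral_sub h2 h3, integral_const_mul, integral_const_mul]
  have hgt : 0 < ∫ v : ℝ, (t * f₂ v - f₃ v)^2 / |v| ^ (α + 1) := by
    apply int_pos hq
      (fun v => div_nonneg (sq_nonneg _) (Real.rpow_nonneg (abs_nonneg v) _))
      (show (1:ℝ)/2 < 1 by norm_num)
    intro v hv
    have hv0 : (0:ℝ) < v := lt_trans (by norm_num) hv.1
    have habs : |v| = v := abs_of_pos hv0
    have h2 : f₂ v = 0 := f₂_eq_zero (by rw [habs]; exact hv.2.le)
    have h3 : 0 < f₃ v := f₃_pos (by rw [habs]; exact hv.1)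
    simp only [Function.mem_support]
    rw [h2, mul_zero, zero_sub]
    have hp : 0 < |v| ^ (α+1) := Real.rpow_pos_of_pos (by rw [habs]; exact hv0) _
    exact ne_of_gt (div_pos (by nlinarith) hp)
  rw [hval] at hgt
  have htA : t * A = B := div_mul_cancel₀ B (ne_of_gt hApos)
  nlinarith [mul_pos hApos hgt, htA, hgt, hApos, sq_nonneg t]
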